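/- Let A be a finite-dimensional algebra over an algebraically closed field K with Λ₀ as above and λ ↦ λ' an involution on Λ₀. If there exists a symmetrizing form τ on B = End_A(⊕_{λ∈Λ₀} P^λ), then: (i) λ' = λ and τ(θ_λ) ≠ 0 for all λ ∈ Λ₀; (ii) τ(f) = 0 for every f ∈ Hom_A(P^λ, P^μ) with λ ≠ μ in Λ₀. -/
import Mathlib


/-- The socle of a module: the largest semisimple submodule. -/
def Socle (A M : Type) [Ring A] [AddCommGroup M] [Module A M] : Submodule A M :=
  ⨆ (p : Submodule A M) (_ : IsSimpleModule A ↥p), p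

/-- The radical of a module: the intersection of all maximal submodules. -/
def Rad (A M : Type) [Ring A] [AddCommGroup M] [Module A M] : Submodule A M :=
  sInf {p : Submodule A M | IsCoatom p}

/-- The canonical embedding of `Hom_A(P^λ, P^μ)` into `End_A(⊕ P^λ)`. -/
noncomputable def emb (A : Type) [Ring A] (ι : Type) [DecidableEq ι]
    (P : ι → Type) [∀ i, AddCommGroup (P i)] [∀ i, Module A (P i)]
    (l m : ι) (f : P l →ₗ[A] P m) : Module.End A (DirectSum ι P) :=
  (DirectSum.lof A ι P m).comp (f.comp (DirectSum.component A ι P l))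

section Helpers

variable {A : Type} [Ring A] {ι : Type} [DecidableEq ι]
    {Q : ι → Type} [∀ i, AddCommGroup (Q i)] [∀ i, Module A (Q i)]

lemma emb_apply (l m : ι) (f : Q l →ₗ[A] Q m) (x : DirectSum ι Q) :
    emb A ι Q l m f x = DirectSum.lof A ι Q m (f (DirectSum.component A ι Q l x)) := rfl

lemma emb_mul_same (a b c : ι) (f : Q a →ₗ[A] Q b) (g : Q c →ₗ[A] Q a) :
    emb A ι Q a b f * emb A ι Q c a g = emb A ι Q c b (f ∘ₗ g) := by
  apply LinearMap.ext; intro x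
  simp [emb_apply, Module.End.mul_apply]

lemma emb_mul_ne (a b c d : ι) (h : d ≠ a) (f : Q a →ₗ[A] Q b) (g : Q c →ₗ[A] Q d) :
    emb A ι Q a b f * emb A ι Q c d g = 0 := by
  apply LinearMap.ext; intro x
  have hz : DirectSum.component A ι Q a
      (DirectSum.lof A ι Q d (g (DirectSum.component A ι Q c x))) = 0 := by
    rw [DirectSum.component.of, dif_neg h]
  simp [emb_apply, Module.End.mul_apply, hz]

lemma emb_zero (l m : ι) : emb A ι Q l m 0 = 0 := by
  apply LinearMap.ext; intro x
  simp [emb_apply]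

lemma emb_eq_zero (l m : ι) (f : Q l →ₗ[A] Q m) (h : emb A ι Q l m f = 0) : f = 0 := by
  apply LinearMap.ext; intro x
  have := congrArg (fun E : Module.End A (DirectSum ι Q) =>
    DirectSum.component A ι Q m (E (DirectSum.lof A ι Q l x))) h
  simpa [emb_apply] using this

lemma emb_sandwich (s t : ι) (y : Module.End A (DirectSum ι Q)) :
    emb A ι Q s s LinearMap.id * y * emb A ι Q t t LinearMap.id
      = emb A ι Q t s ((DirectSum.component A ι Q s) ∘ₗ (y ∘ₗ (DirectSum.lof A ι Q t))) := rfl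

lemma emb_smul (K : Type) [Field K] [Algebra K A]
    [∀ i, Module K (Q i)] [∀ i, IsScalarTower K A (Q i)] [∀ i, SMulCommClass A K (Q i)]
    (l m : ι) (c : K) (f : Q l →ₗ[A] Q m) :
    emb A ι Q l m (c • f) = c • emb A ι Q l m f := by
  apply LinearMap.ext; intro x
  simp [emb_apply, LinearMap.map_smul_of_tower]

lemma simple_le_socle {M : Type} [AddCommGroup M] [Module A M] (p : Submodule A M)
    (hp : IsSimpleModule A ↥p) : p ≤ Socle A M :=
  le_iSup₂ (f := fun (q : Submodule A M) (_ : IsSimpleModule A ↥q) => q) p hp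

lemma sub_socle {M : Type} [AddCommGroup M] [Module A M]
    (hS : IsSimpleModule A ↥(Socle A M)) (q : Submodule A M)
    (h1 : q ≤ Socle A M) (h2 : q ≠ ⊥) : q = Socle A M := by
  set p := Socle A M
  rcases eq_bot_or_eq_top (Submodule.comap p.subtype q) with hb | ht
  · exfalso
    apply h2
    have := congrArg (Submodule.map p.subtype) hb
    rw [Submodule.map_comap_subtype, Submodule.map_bot, inf_eq_right.mpr h1] at this
    exact this
  · exact le_antisymm h1 (Submodule.comap_subtype_eq_top.mp ht)

lemma socle_nontrivial {M N : Type} [AddCommGroup M] [Module A M] [AddCommGroup N] [Module A N]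
    (hN : IsSimpleModule A N) (e : ↥(Socle A M) ≃ₗ[A] N) : Socle A M ≠ ⊥ := by
  haveI : Nontrivial N := IsSimpleModule.nontrivial A N
  haveI : Nontrivial ↥(Socle A M) := e.symm.injective.nontrivial
  exact Submodule.nontrivial_iff_ne_bot.mp ‹_›

end Helpers


theorem stmt_gen
    (K A : Type) [Field K] [IsAlgClosed K] [Ring A] [Algebra K A]
    (ι : Type) [DecidableEq ι] (LL QQ : ι → Type)
    [∀ i, AddCommGroup (LL i)] [∀ i, Module A (LL i)] [∀ i, Module K (LL i)]
    [∀ i, IsScalarTower K A (LL i)] [∀ i, FiniteDimensional K (LL i)]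
    [∀ i, AddCommGroup (QQ i)] [∀ i, Module A (QQ i)] [∀ i, Module K (QQ i)]
    [∀ i, IsScalarTower K A (QQ i)] [∀ i, SMulCommClass A K (QQ i)]
    (hsimple : ∀ i, IsSimpleModule A (LL i))
    (hdistinct : ∀ s t : ι, Nonempty (LL s ≃ₗ[A] LL t) → s = t)
    (hcover : ∀ i, ∃ π : QQ i →ₗ[A] LL i, Function.Surjective π ∧ LinearMap.ker π = Rad A (QQ i))
    (pr : ι → ι)
    (hpr : ∀ s, Nonempty (↥(Socle A (QQ s)) ≃ₗ[A] LL (pr s)))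
    (hprinv : ∀ s, pr (pr s) = s)
    (θ : ∀ s, QQ s →ₗ[A] QQ (pr s))
    (hθ : ∀ s, LinearMap.range (θ s) = Socle A (QQ (pr s)))
    (τ : Module.End A (DirectSum ι QQ) →ₗ[K] K)
    (hsymm : ∀ x y, τ (x * y) = τ (y * x))
    (hnd : ∀ x, x ≠ 0 → ∃ y, τ (x * y) ≠ 0) :
    (∀ s, pr s = s ∧ τ (emb A ι QQ s (pr s) (θ s)) ≠ 0) ∧
    (∀ s t, s ≠ t → ∀ f : QQ s →ₗ[A] QQ t, τ (emb A ι QQ s t f) = 0) := by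
  classical
  have part2 : ∀ s t : ι, s ≠ t → ∀ f : QQ s →ₗ[A] QQ t, τ (emb A ι QQ s t f) = 0 := by
    intro s t hst f
    have h1 : emb A ι QQ t t LinearMap.id * emb A ι QQ s t f = emb A ι QQ s t f := by
      rw [emb_mul_same, LinearMap.id_comp]
    have h2 : emb A ι QQ s t f * emb A ι QQ t t LinearMap.id = 0 :=
      emb_mul_ne s t t t (Ne.symm hst) f LinearMap.id
    calc τ (emb A ι QQ s t f) = τ (emb A ι QQ t t LinearMap.id * emb A ι QQ s t f) := by rw [h1]
      _ = τ (emb A ι QQ s t f * emb A ι QQ t t LinearMap.id) := hsymm _ _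
      _ = 0 := by rw [h2, map_zero]
  have stepB : ∀ (s t : ι), s ≠ t →
      Nonempty (↥(Socle A (QQ t)) ≃ₗ[A] LL s) → Nonempty (↥(Socle A (QQ s)) ≃ₗ[A] LL t) →
      ∀ g : QQ t →ₗ[A] QQ s, Socle A (QQ t) ≤ LinearMap.ker g := by
    intro s t hst het hes g
    obtain ⟨et⟩ := het
    obtain ⟨es⟩ := hes
    by_contra hle
    haveI := hsimple s
    haveI := hsimple t
    haveI hsimp_t : IsSimpleModule A ↥(Socle A (QQ t)) := IsSimpleModule.congr et
    haveI hsimp_s : IsSimpleModule A ↥(Socle A (QQ s)) := IsSimpleModule.congr es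
    set h : ↥(Socle A (QQ t)) →ₗ[A] QQ s := g ∘ₗ (Socle A (QQ t)).subtype with hh
    have hhne : h ≠ 0 := by
      intro h0
      apply hle
      intro x hx
      have := congrArg (fun F : ↥(Socle A (QQ t)) →ₗ[A] QQ s => F ⟨x, hx⟩) h0
      simpa [hh] using this
    have hkbot : LinearMap.ker h = ⊥ := by
      rcases eq_bot_or_eq_top (LinearMap.ker h) with hb | ht'
      · exact hb
      · exact absurd (LinearMap.ker_eq_top.mp ht') hhne
    set e1 := LinearEquiv.ofInjective h (LinearMap.ker_eq_bot.mp hkbot)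
    have hrne : LinearMap.range h ≠ ⊥ := fun h0 => hhne (LinearMap.range_eq_bot.mp h0)
    have hrsimp : IsSimpleModule A ↥(LinearMap.range h) := IsSimpleModule.congr e1.symm
    have hrle : LinearMap.range h ≤ Socle A (QQ s) := simple_le_socle _ hrsimp
    have hreq : LinearMap.range h = Socle A (QQ s) := sub_socle hsimp_s _ hrle hrne
    have : Nonempty (LL s ≃ₗ[A] LL t) :=
      ⟨(((et.symm.trans e1).trans (LinearEquiv.ofEq _ _ hreq)).trans es)⟩
    exact hst (hdistinct s t this)
  -- socles are nonzero
  have socle_ne : ∀ u : ι, Socle A (QQ u) ≠ ⊥ := by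
    intro u
    obtain ⟨e⟩ := hpr u
    exact socle_nontrivial (hsimple (pr u)) e
  -- part (i), first half : pr s = s
  have part1a : ∀ s : ι, pr s = s := by
    intro s
    by_contra hne
    have hθne : θ s ≠ 0 := by
      intro h0
      apply socle_ne (pr s)
      rw [← hθ s, h0, LinearMap.range_zero]
    have hxne : emb A ι QQ s (pr s) (θ s) ≠ 0 := fun h0 => hθne (emb_eq_zero _ _ _ h0)
    obtain ⟨y, hy⟩ := hnd _ hxne
    apply hy
    set x := emb A ι QQ s (pr s) (θ s) with hx
    have hx1 : emb A ι QQ (pr s) (pr s) LinearMap.id * x = x := by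
      rw [hx, emb_mul_same, LinearMap.id_comp]
    have hx2 : x * emb A ι QQ s s LinearMap.id = x := by
      rw [hx, emb_mul_same, LinearMap.comp_id]
    set g := (DirectSum.component A ι QQ s) ∘ₗ (y ∘ₗ (DirectSum.lof A ι QQ (pr s))) with hg
    have het : Nonempty (↥(Socle A (QQ (pr s))) ≃ₗ[A] LL s) := by
      have h := hpr (pr s); rwa [hprinv s] at h
    have hgθ : g ∘ₗ θ s = 0 := by
      apply LinearMap.ext; intro v
      have hv : θ s v ∈ Socle A (QQ (pr s)) := by
        rw [← hθ s]; exact LinearMap.mem_range_self _ v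
      have hm := stepB s (pr s) (fun h => hne h.symm) het (hpr s) g hv
      simpa [LinearMap.mem_ker] using hm
    calc τ (x * y) = τ ((x * emb A ι QQ s s LinearMap.id) * y) := by rw [hx2]
      _ = τ (x * (emb A ι QQ s s LinearMap.id * y)) := by rw [mul_assoc]
      _ = τ ((emb A ι QQ s s LinearMap.id * y) * x) := hsymm _ _
      _ = τ ((emb A ι QQ s s LinearMap.id * y) * (emb A ι QQ (pr s) (pr s) LinearMap.id * x)) := by
            rw [hx1]
      _ = τ ((emb A ι QQ s s LinearMap.id * y * emb A ι QQ (pr s) (pr s) LinearMap.id) * x) := by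
            rw [← mul_assoc]
      _ = τ (emb A ι QQ (pr s) s g * x) := by rw [emb_sandwich]
      _ = τ (emb A ι QQ s s (g ∘ₗ θ s)) := by rw [hx, emb_mul_same]
      _ = 0 := by rw [hgθ, emb_zero, map_zero]
  -- part (i), second half
  have auxD : ∀ (s u : ι) (hu : u = s) (ψ : QQ s →ₗ[A] QQ u),
      LinearMap.range ψ = Socle A (QQ u) → Nonempty (↥(Socle A (QQ u)) ≃ₗ[A] LL u) →
      τ (emb A ι QQ s u ψ) ≠ 0 := by
    intro s u hu
    subst hu
    intro ψ hψ hsoc hτ0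
    obtain ⟨eS⟩ := hsoc
    haveI := hsimple u
    haveI hSsimp : IsSimpleModule A ↥(Socle A (QQ u)) := IsSimpleModule.congr eS
    have hψne : ψ ≠ 0 := by
      intro h0
      apply socle_ne u
      rw [← hψ, h0, LinearMap.range_zero]
    have hxne : emb A ι QQ u u ψ ≠ 0 := fun h0 => hψne (emb_eq_zero _ _ _ h0)
    obtain ⟨y, hy⟩ := hnd _ hxne
    apply hy
    set e := emb A ι QQ u u LinearMap.id with he
    set x := emb A ι QQ u u ψ with hx
    have hx1 : e * x = x := by rw [hx, he, emb_mul_same, LinearMap.id_comp]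
    have hx2 : x * e = x := by rw [hx, he, emb_mul_same, LinearMap.comp_id]
    set g := (DirectSum.component A ι QQ u) ∘ₗ (y ∘ₗ (DirectSum.lof A ι QQ u)) with hg
    obtain ⟨π, hπs, hπk⟩ := hcover u
    -- the one-dimensionality claim
    have claim : ∃ c : K, ψ ∘ₗ g = c • ψ := by
      by_cases hz : ψ ∘ₗ g = 0
      · exact ⟨0, by rw [hz, zero_smul]⟩
      have hRad : ∀ N : Submodule A (QQ u), IsCoatom N → Rad A (QQ u) ≤ N :=
        fun N hN => sInf_le hN
      have hco : ∀ φ : QQ u →ₗ[A] QQ u, LinearMap.range φ = Socle A (QQ u) →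
          LinearMap.ker π ≤ LinearMap.ker φ := by
        intro φ hφ
        have hsim : IsSimpleModule A (QQ u ⧸ LinearMap.ker φ) :=
          IsSimpleModule.congr ((φ.quotKerEquivRange).trans (LinearEquiv.ofEq _ _ hφ))
        rw [hπk]
        exact hRad _ (isSimpleModule_iff_isCoatom.mp hsim)
      have hrle : LinearMap.range (ψ ∘ₗ g) ≤ Socle A (QQ u) := by
        rw [← hψ]; exact LinearMap.range_comp_le_range g ψ
      have hreq : LinearMap.range (ψ ∘ₗ g) = Socle A (QQ u) :=
        sub_socle hSsimp _ hrle (fun h0 => hz (LinearMap.range_eq_bot.mp h0))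
      have hπh := hco (ψ ∘ₗ g) hreq
      have hπψ := hco ψ hψ
      set hbar := (LinearMap.ker π).liftQ (ψ ∘ₗ g) hπh with hhbar
      set ψbar := (LinearMap.ker π).liftQ ψ hπψ with hψbardef
      haveI hTsimp : IsSimpleModule A (QQ u ⧸ LinearMap.ker π) :=
        IsSimpleModule.congr (π.quotKerEquivOfSurjective hπs)
      have hmkh : hbar ∘ₗ (LinearMap.ker π).mkQ = ψ ∘ₗ g := Submodule.liftQ_mkQ _ _ _
      have hmkψ : ψbar ∘ₗ (LinearMap.ker π).mkQ = ψ := Submodule.liftQ_mkQ _ _ _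
      have hrψbar : LinearMap.range ψbar = Socle A (QQ u) := by
        rw [hψbardef, Submodule.range_liftQ]; exact hψ
      have hrhbar : LinearMap.range hbar = Socle A (QQ u) := by
        rw [hhbar, Submodule.range_liftQ]; exact hreq
      set ψ' := LinearMap.codRestrict (Socle A (QQ u)) ψbar
        (fun v => hrψbar ▸ LinearMap.mem_range_self ψbar v) with hψ'def
      set h' := LinearMap.codRestrict (Socle A (QQ u)) hbar
        (fun v => hrhbar ▸ LinearMap.mem_range_self hbar v) with hh'def
      have hψbarne : ψbar ≠ 0 := by
        intro h0
        apply hψne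
        rw [← hmkψ, h0, LinearMap.zero_comp]
      have hinj : Function.Injective ψ' := by
        rw [← LinearMap.ker_eq_bot]
        have hkk : LinearMap.ker ψ' = LinearMap.ker ψbar := LinearMap.ker_codRestrict _ _ _
        rw [hkk]
        rcases eq_bot_or_eq_top (LinearMap.ker ψbar) with hb | ht'
        · exact hb
        · exact absurd (LinearMap.ker_eq_top.mp ht') hψbarne
      have hsurj : Function.Surjective ψ' := by
        rintro ⟨w, hw⟩
        rw [← hrψbar] at hw
        obtain ⟨v, hv⟩ := hw
        exact ⟨v, Subtype.ext hv⟩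
      set eψ := LinearEquiv.ofBijective ψ' ⟨hinj, hsurj⟩ with heψ
      set E : ↥(Socle A (QQ u)) →ₗ[A] ↥(Socle A (QQ u)) := h' ∘ₗ eψ.symm.toLinearMap with hE_def
      haveI : SMulCommClass A K ↥(Socle A (QQ u)) :=
        ⟨fun a k v => Subtype.ext (smul_comm a k (v : QQ u))⟩
      haveI : FiniteDimensional K ↥(Socle A (QQ u)) :=
        LinearEquiv.finiteDimensional (eS.restrictScalars K).symm
      haveI : Nontrivial ↥(Socle A (QQ u)) := by
        haveI : Nontrivial (LL u) := IsSimpleModule.nontrivial A (LL u)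
        exact eS.symm.injective.nontrivial
      obtain ⟨c, hcE⟩ := Module.End.exists_eigenvalue (E.restrictScalars K)
      obtain ⟨v, hv⟩ := hcE.exists_hasEigenvector
      have hEv : E v = c • v := hv.apply_eq_smul
      have hE : ∀ w, E w = c • w := by
        intro w
        have hker : LinearMap.ker (E - c • LinearMap.id) = ⊤ := by
          rcases eq_bot_or_eq_top (LinearMap.ker (E - c • LinearMap.id)) with hb | ht'
          · exfalso
            have hvm : v ∈ LinearMap.ker (E - c • LinearMap.id) := by
              simp [LinearMap.mem_ker, LinearMap.sub_apply, hEv, sub_self]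
            rw [hb] at hvm
            exact hv.2 (by simpa using hvm)
          · exact ht'
        have h0 : E - c • LinearMap.id = 0 := LinearMap.ker_eq_top.mp hker
        have h1 : E = c • LinearMap.id := sub_eq_zero.mp h0
        rw [h1]; rfl
      have key : ∀ z, h' z = E (ψ' z) := by
        intro z
        have hzz : eψ.symm (ψ' z) = z := by
          have h1 : ψ' z = eψ z := rfl
          rw [h1, LinearEquiv.symm_apply_apply]
        calc h' z = h' (eψ.symm (ψ' z)) := by rw [hzz]
          _ = E (ψ' z) := rfl
      refine ⟨c, ?_⟩
      apply LinearMap.ext; intro w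
      have hfin : (ψ ∘ₗ g) w = c • ψ w := by
        calc (ψ ∘ₗ g) w = hbar ((LinearMap.ker π).mkQ w) := by rw [← hmkh]; rfl
          _ = ((h' ((LinearMap.ker π).mkQ w) : ↥(Socle A (QQ u))) : QQ u) := rfl
          _ = ((E (ψ' ((LinearMap.ker π).mkQ w)) : ↥(Socle A (QQ u))) : QQ u) := by rw [key]
          _ = ((c • ψ' ((LinearMap.ker π).mkQ w) : ↥(Socle A (QQ u))) : QQ u) := by rw [hE]
          _ = c • ((ψ' ((LinearMap.ker π).mkQ w) : ↥(Socle A (QQ u))) : QQ u) := rfl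
          _ = c • ψbar ((LinearMap.ker π).mkQ w) := rfl
          _ = c • ψ w := by rw [← hmkψ]; rfl
      simpa using hfin
    obtain ⟨c, hc⟩ := claim
    calc τ (x * y) = τ ((x * e) * y) := by rw [hx2]
      _ = τ (x * (e * y)) := by rw [mul_assoc]
      _ = τ ((e * y) * x) := hsymm _ _
      _ = τ ((e * y) * (e * x)) := by rw [hx1]
      _ = τ ((e * y * e) * x) := by rw [← mul_assoc]
      _ = τ (emb A ι QQ u u g * x) := by rw [he, emb_sandwich]
      _ = τ (x * emb A ι QQ u u g) := hsymm _ _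
      _ = τ (emb A ι QQ u u (ψ ∘ₗ g)) := by rw [hx, emb_mul_same]
      _ = τ (c • emb A ι QQ u u ψ) := by rw [hc, emb_smul]
      _ = c * τ (emb A ι QQ u u ψ) := by rw [map_smul, smul_eq_mul]
      _ = 0 := by rw [hτ0, mul_zero]
  refine ⟨fun s => ⟨part1a s, ?_⟩, part2⟩
  have hps := part1a s
  have hsoc : Nonempty (↥(Socle A (QQ (pr s))) ≃ₗ[A] LL (pr s)) := by
    have h := hpr s
    rw [hps] at h ⊢
    exact h
  exact auxD s (pr s) hps (θ s) (hθ s) hsoc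



/-- If there exists a symmetrizing form `τ` on `B = End_A(⊕_{λ∈Λ₀} P^λ)`,
then (i) `λ' = λ` and `τ(θ_λ) ≠ 0` for all `λ ∈ Λ₀`, and (ii) `τ(f) = 0` for every
`f ∈ Hom_A(P^λ, P^μ)` with `λ ≠ μ` in `Λ₀`. -/
theorem stmt_3
    (K A : Type) [Field K] [IsAlgClosed K] [Ring A] [Algebra K A] [FiniteDimensional K A]
    (Lam : Type) [DecidableEq Lam] (L P : Lam → Type)
    [∀ l, AddCommGroup (L l)] [∀ l, Module A (L l)] [∀ l, Module K (L l)]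
    [∀ l, IsScalarTower K A (L l)] [∀ l, FiniteDimensional K (L l)]
    [∀ l, AddCommGroup (P l)] [∀ l, Module A (P l)] [∀ l, Module K (P l)]
    [∀ l, IsScalarTower K A (P l)] [∀ l, SMulCommClass A K (P l)]
    [∀ l, FiniteDimensional K (P l)]
    (hsimple : ∀ l, IsSimpleModule A (L l))
    (hdistinct : ∀ l m, Nonempty (L l ≃ₗ[A] L m) → l = m)
    (hproj : ∀ l, Module.Projective A (P l))
    (hcover : ∀ l, ∃ π : P l →ₗ[A] L l, Function.Surjective π ∧ LinearMap.ker π = Rad A (P l))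
    -- the map ' on Λ₀ = {l | P l injective}, an involution, with soc(P^λ) ≅ L^{λ'}
    (pr : ∀ s : {l : Lam // Module.Injective A (P l)}, {l : Lam // Module.Injective A (P l)})
    (hpr : ∀ s, Nonempty (↥(Socle A (P s.1)) ≃ₗ[A] L (pr s).1))
    (hprinv : ∀ s, pr (pr s) = s)
    -- the fixed nonzero maps θ_λ : P^λ → P^{λ'} with image soc(P^{λ'})
    (θ : ∀ s : {l : Lam // Module.Injective A (P l)}, P s.1 →ₗ[A] P (pr s).1)
    (hθ : ∀ s, LinearMap.range (θ s) = Socle A (P (pr s).1))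
    -- a symmetrizing form τ on B = End_A(⊕_{λ∈Λ₀} P^λ)
    (τ : Module.End A (DirectSum {l : Lam // Module.Injective A (P l)} (fun s => P s.1)) →ₗ[K] K)
    (hsymm : ∀ x y, τ (x * y) = τ (y * x))
    (hnd : ∀ x, x ≠ 0 → ∃ y, τ (x * y) ≠ 0) :
    (∀ s, pr s = s ∧
      τ (emb A {l : Lam // Module.Injective A (P l)} (fun s => P s.1) s (pr s) (θ s)) ≠ 0) ∧
    (∀ s t, s ≠ t → ∀ f : P s.1 →ₗ[A] P t.1,
      τ (emb A {l : Lam // Module.Injective A (P l)} (fun s => P s.1) s t f) = 0) :=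
  stmt_gen K A {l : Lam // Module.Injective A (P l)}
    (fun s => L s.1) (fun s => P s.1)
    (fun s => hsimple s.1)
    (fun s t h => Subtype.ext (hdistinct s.1 t.1 h))
    (fun s => hcover s.1)
    pr hpr hprinv θ hθ τ hsymm hnd
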